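/- Let n ≥ 2 and ψ ∈ C²(D). Define the 1-form J on D with components J_β := Sψ·∂_βψ − (1/2)·∂_βf·( −(∂_tψ)² + |∇_xψ|² ) + ((n−1)/4)·ψ·∂_βψ for β = 0, 1, …, n. Then the Minkowski divergence satisfies div_g J = □ψ · S_*ψ everywhere on D. -/

import Mathlib

open Real MeasureTheory
open scoped BigOperators

noncomputable section

/-- Minkowski spacetime `ℝ^{1+n}`, with coordinates `(t, x)`. -/
abbrev Spacetime (n : ℕ) := ℝ × EuclideanSpace ℝ (Fin n)

/-- The exterior `D` of the light cone: `{(t,x) : |t| < |x|}`. -/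
def Dom (n : ℕ) : Set (Spacetime n) := {p | |p.1| < ‖p.2‖}

/-- Partial derivative in the time direction. -/
def dt {n : ℕ} (φ : Spacetime n → ℝ) (p : Spacetime n) : ℝ :=
  fderiv ℝ φ p (1, 0)

/-- Partial derivative in the `i`-th spatial direction. -/
def dx {n : ℕ} (i : Fin n) (φ : Spacetime n → ℝ) (p : Spacetime n) : ℝ :=
  fderiv ℝ φ p (0, EuclideanSpace.single i 1)

/-- The wave operator `□φ = −∂²_t φ + Δ_x φ`. -/
def box {n : ℕ} (φ : Spacetime n → ℝ) (p : Spacetime n) : ℝ :=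
  - dt (dt φ) p + ∑ i, dx i (dx i φ) p

/-- Null coordinate `u = (t − r)/2`. -/
def uu {n : ℕ} (p : Spacetime n) : ℝ := (p.1 - ‖p.2‖) / 2

/-- Null coordinate `v = (t + r)/2`. -/
def vv {n : ℕ} (p : Spacetime n) : ℝ := (p.1 + ‖p.2‖) / 2

/-- Radial derivative `∂_r φ = (x/|x|)·∇_x φ`. -/
def dr {n : ℕ} (φ : Spacetime n → ℝ) (p : Spacetime n) : ℝ :=
  (∑ i, p.2 i * dx i φ p) / ‖p.2‖

/-- The hyperbolic square distance `f(t,x) = (|x|² − t²)/4 = −uv`. -/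
def ff {n : ℕ} (p : Spacetime n) : ℝ := (‖p.2‖ ^ 2 - p.1 ^ 2) / 4

/-- `G_F(s) := −(s F'(s))'`. -/
def GF (F : ℝ → ℝ) (s : ℝ) : ℝ := - deriv (fun t => t * deriv F t) s

/-- `H_F(s) := (1/2)(s G_F(s))'`. -/
def HF (F : ℝ → ℝ) (s : ℝ) : ℝ := (1 / 2) * deriv (fun t => t * GF F t) s

/-- `Sφ := ⟨∇f,∇φ⟩_g = (1/2)(t ∂_t φ + r ∂_r φ)`. -/
def Sop {n : ℕ} (φ : Spacetime n → ℝ) (q : Spacetime n) : ℝ :=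
  (1 / 2) * (q.1 * dt φ q + ‖q.2‖ * dr φ q)

/-- `S_*φ := Sφ + ((n−1)/4) φ`. -/
def Sstar {n : ℕ} (φ : Spacetime n → ℝ) (q : Spacetime n) : ℝ :=
  Sop φ q + (((n : ℝ) - 1) / 4) * φ q

/-! ### Directional derivative machinery -/

section HasD
variable {n : ℕ} {p v : Spacetime n} {a b : Spacetime n → ℝ} {da db : ℝ}

def HasD (φ : Spacetime n → ℝ) (p v : Spacetime n) (d : ℝ) : Prop :=
  ∃ L : Spacetime n →L[ℝ] ℝ, HasFDerivAt φ L p ∧ L v = d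

lemma HasD.fd (h : HasD a p v da) : fderiv ℝ a p v = da := by
  obtain ⟨L, hL, hv⟩ := h; rw [hL.fderiv]; exact hv

lemma DifferentiableAt.hasD (h : DifferentiableAt ℝ a p) (v : Spacetime n) :
    HasD a p v (fderiv ℝ a p v) := ⟨_, h.hasFDerivAt, rfl⟩

lemma HasD.congr_d (h : HasD a p v da) (hd : da = db) : HasD a p v db := hd ▸ h

lemma HasD.congr_fun (h : HasD a p v da) (hab : ∀ x, a x = b x) : HasD b p v da := by
  have : a = b := funext hab; exact this ▸ h

lemma HasD.add (ha : HasD a p v da) (hb : HasD b p v db) :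
    HasD (fun x => a x + b x) p v (da + db) := by
  obtain ⟨La, hLa, rfl⟩ := ha; obtain ⟨Lb, hLb, rfl⟩ := hb
  exact ⟨La + Lb, hLa.add hLb, rfl⟩

lemma HasD.sub (ha : HasD a p v da) (hb : HasD b p v db) :
    HasD (fun x => a x - b x) p v (da - db) := by
  obtain ⟨La, hLa, rfl⟩ := ha; obtain ⟨Lb, hLb, rfl⟩ := hb
  exact ⟨La - Lb, hLa.sub hLb, rfl⟩

lemma HasD.neg (ha : HasD a p v da) : HasD (fun x => -a x) p v (-da) := by
  obtain ⟨La, hLa, rfl⟩ := ha; exact ⟨-La, hLa.neg, rfl⟩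

lemma HasD.mul (ha : HasD a p v da) (hb : HasD b p v db) :
    HasD (fun x => a x * b x) p v (da * b p + a p * db) := by
  obtain ⟨La, hLa, rfl⟩ := ha; obtain ⟨Lb, hLb, rfl⟩ := hb
  refine ⟨_, hLa.mul hLb, ?_⟩
  simp [mul_comm, add_comm]

lemma HasD.const (c : ℝ) : HasD (fun _ : Spacetime n => c) p v 0 :=
  ⟨0, hasFDerivAt_const c p, rfl⟩

lemma HasD.const_mul (ha : HasD a p v da) (c : ℝ) :
    HasD (fun x => c * a x) p v (c * da) :=
  (((HasD.const c).mul ha).congr_d (by ring))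

lemma HasD.div_const (ha : HasD a p v da) (c : ℝ) :
    HasD (fun x => a x / c) p v (da / c) := by
  have := (ha.const_mul c⁻¹).congr_fun (fun x => by rw [inv_mul_eq_div])
  exact this.congr_d (by rw [inv_mul_eq_div])

lemma HasD.sq (ha : HasD a p v da) : HasD (fun x => a x ^ 2) p v (2 * a p * da) :=
  ((ha.mul ha).congr_fun (fun x => (_root_.sq (a x)).symm)).congr_d (by ring)

lemma HasD.sum {ι : Type*} {s : Finset ι} {F : ι → Spacetime n → ℝ} {d : ι → ℝ}
    (h : ∀ i ∈ s, HasD (F i) p v (d i)) :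
    HasD (fun x => ∑ i ∈ s, F i x) p v (∑ i ∈ s, d i) := by
  classical
  induction s using Finset.induction_on with
  | empty => exact (HasD.const 0).congr_fun (by simp) |>.congr_d (by simp)
  | @insert a' s' hni ih =>
    have h1 := (h a' (Finset.mem_insert_self _ _)).add
      (ih fun i hi => h i (Finset.mem_insert_of_mem hi))
    refine (h1.congr_fun fun x => ?_).congr_d ?_ <;> rw [Finset.sum_insert hni]

lemma hasD_fst : HasD (fun x : Spacetime n => x.1) p v v.1 :=
  ⟨ContinuousLinearMap.fst ℝ ℝ _, hasFDerivAt_fst, rfl⟩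

lemma hasD_coord (i : Fin n) : HasD (fun x : Spacetime n => x.2 i) p v (v.2 i) :=
  ⟨(EuclideanSpace.proj (𝕜 := ℝ) i).comp (ContinuousLinearMap.snd ℝ ℝ _),
    ((EuclideanSpace.proj (𝕜 := ℝ) i).hasFDerivAt).comp p hasFDerivAt_snd, rfl⟩

end HasD

/-! ### Derivatives of ff, second-derivative symmetry -/

section lemmas
variable {n : ℕ} {p v : Spacetime n}

lemma normsq (y : EuclideanSpace ℝ (Fin n)) : ‖y‖ ^ 2 = ∑ i, y i ^ 2 := by
  rw [EuclideanSpace.norm_eq, Real.sq_sqrt (by positivity)]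
  simp [sq_abs]

lemma ff_eq : (ff : Spacetime n → ℝ) = fun p => ((∑ i, p.2 i ^ 2) - p.1 ^ 2) / 4 := by
  funext p; rw [ff, normsq]

lemma hasD_ff : HasD (ff : Spacetime n → ℝ) p v
    (((∑ i, 2 * p.2 i * v.2 i) - 2 * p.1 * v.1) / 4) := by
  rw [ff_eq]
  exact ((HasD.sum fun i _ => (hasD_coord i).sq).sub hasD_fst.sq).div_const 4

lemma dt_ff (p : Spacetime n) : dt ff p = -(p.1 / 2) := by
  have h := (hasD_ff (p := p) (v := ((1 : ℝ), (0 : EuclideanSpace ℝ (Fin n))))).fd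
  rw [dt, h]
  norm_num
  ring

lemma dx_ff (j : Fin n) (p : Spacetime n) : dx j ff p = p.2 j / 2 := by
  have h := (hasD_ff (p := p)
    (v := ((0 : ℝ), EuclideanSpace.single j (1 : ℝ)))).fd
  rw [dx, h]
  simp [EuclideanSpace.single_apply, mul_ite, Finset.sum_ite_eq', mul_comm]
  ring

lemma diff_fderiv_apply {φ : Spacetime n → ℝ} (h : ContDiffAt ℝ 2 φ p) (v : Spacetime n) :
    DifferentiableAt ℝ (fun x => fderiv ℝ φ x v) p := by
  have h1 : ContDiffAt ℝ 1 (fderiv ℝ φ) p := h.fderiv_right (le_refl 2)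
  exact (h1.differentiableAt one_ne_zero).clm_apply (differentiableAt_const v)

lemma swap_second {φ : Spacetime n → ℝ} (h : ContDiffAt ℝ 2 φ p) (v w : Spacetime n) :
    fderiv ℝ (fun x => fderiv ℝ φ x v) p w = fderiv ℝ (fun x => fderiv ℝ φ x w) p v := by
  have h1 : ContDiffAt ℝ 1 (fderiv ℝ φ) p := h.fderiv_right (le_refl 2)
  have hd : DifferentiableAt ℝ (fderiv ℝ φ) p := h1.differentiableAt one_ne_zero
  have e : ∀ z : Spacetime n, fderiv ℝ (fun x => fderiv ℝ φ x z) p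
      = (fderiv ℝ (fderiv ℝ φ) p).flip z := by
    intro z
    rw [fderiv_clm_apply hd (differentiableAt_const z)]
    simp
  rw [e, e]
  simp only [ContinuousLinearMap.flip_apply]
  exact (h.isSymmSndFDerivAt (by simp) w v)

end lemmas

lemma sum_two {n : ℕ} (a b : Fin n → ℝ) : ∑ i, 2 * a i * b i = 2 * ∑ i, a i * b i := by
  rw [Finset.mul_sum]; exact Finset.sum_congr rfl fun i _ => by ring

/-! ### The components of the current, in polynomial form -/

def Afun (n : ℕ) (ψ : Spacetime n → ℝ) : Spacetime n → ℝ :=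
  fun p => (1 / 2) * (p.1 * dt ψ p + ∑ i, p.2 i * dx i ψ p)

def Efun (n : ℕ) (ψ : Spacetime n → ℝ) : Spacetime n → ℝ :=
  fun p => -(dt ψ p) ^ 2 + ∑ i, (dx i ψ p) ^ 2

def J0fun (n : ℕ) (ψ : Spacetime n → ℝ) : Spacetime n → ℝ :=
  fun p => Afun n ψ p * dt ψ p - (1 / 2) * (-(p.1 / 2)) * Efun n ψ p
    + (((n : ℝ) - 1) / 4) * ψ p * dt ψ p

def Jxfun (n : ℕ) (ψ : Spacetime n → ℝ) (j : Fin n) : Spacetime n → ℝ :=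
  fun p => Afun n ψ p * dx j ψ p - (1 / 2) * (p.2 j / 2) * Efun n ψ p
    + (((n : ℝ) - 1) / 4) * ψ p * dx j ψ p

/-- **Identity (2.27)** (multiplier divergence identity): for `ψ ∈ C²(D)`, the 1-form
`J_β = Sψ·∂_βψ − (1/2)∂_βf·⟨∇ψ,∇ψ⟩_g + ((n−1)/4)ψ·∂_βψ` satisfies
`div_g J = □ψ · S_*ψ` on `D`. -/
theorem multiplier_divergence_identity (n : ℕ) (hn : 2 ≤ n)
    (ψ : Spacetime n → ℝ) (hψ : ContDiffOn ℝ 2 ψ (Dom n)) :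
    ∀ q ∈ Dom n,
      - dt (fun p => Sop ψ p * dt ψ p
            - (1 / 2) * dt ff p * (-(dt ψ p) ^ 2 + ∑ i, (dx i ψ p) ^ 2)
            + (((n : ℝ) - 1) / 4) * ψ p * dt ψ p) q
        + ∑ j, dx j (fun p => Sop ψ p * dx j ψ p
            - (1 / 2) * dx j ff p * (-(dt ψ p) ^ 2 + ∑ i, (dx i ψ p) ^ 2)
            + (((n : ℝ) - 1) / 4) * ψ p * dx j ψ p) q
      = box ψ q * Sstar ψ q := by
  intro q hq
  classical
  have hOpen : IsOpen (Dom n) :=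
    isOpen_lt (continuous_fst.abs) (continuous_snd.norm)
  have hC2 : ∀ p ∈ Dom n, ContDiffAt ℝ 2 ψ p := fun p hp => hψ.contDiffAt (hOpen.mem_nhds hp)
  have hnorm : ∀ p ∈ Dom n, ‖p.2‖ ≠ 0 := by
    intro p hp
    have : |p.1| < ‖p.2‖ := hp
    exact ne_of_gt (lt_of_le_of_lt (abs_nonneg _) this)
  -- Sop agrees with Afun on Dom
  have hSop : ∀ p ∈ Dom n, Sop ψ p = Afun n ψ p := by
    intro p hp
    rw [Sop, Afun, dr, mul_div_cancel₀ _ (hnorm p hp)]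
  -- eventual equality for the time component
  have ev0 : (fun p => Sop ψ p * dt ψ p
      - (1 / 2) * dt ff p * (-(dt ψ p) ^ 2 + ∑ i, (dx i ψ p) ^ 2)
      + (((n : ℝ) - 1) / 4) * ψ p * dt ψ p) =ᶠ[nhds q] J0fun n ψ := by
    filter_upwards [hOpen.mem_nhds hq] with p hp
    rw [J0fun, hSop p hp, dt_ff, Efun]
  have evj : ∀ j : Fin n, (fun p => Sop ψ p * dx j ψ p
      - (1 / 2) * dx j ff p * (-(dt ψ p) ^ 2 + ∑ i, (dx i ψ p) ^ 2)
      + (((n : ℝ) - 1) / 4) * ψ p * dx j ψ p) =ᶠ[nhds q] Jxfun n ψ j := by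
    intro j
    filter_upwards [hOpen.mem_nhds hq] with p hp
    rw [Jxfun, hSop p hp, dx_ff, Efun]
  have e0 : dt (fun p => Sop ψ p * dt ψ p
      - (1 / 2) * dt ff p * (-(dt ψ p) ^ 2 + ∑ i, (dx i ψ p) ^ 2)
      + (((n : ℝ) - 1) / 4) * ψ p * dt ψ p) q = dt (J0fun n ψ) q := by
    rw [dt, dt, ev0.fderiv_eq]
  have ej : ∀ j, dx j (fun p => Sop ψ p * dx j ψ p
      - (1 / 2) * dx j ff p * (-(dt ψ p) ^ 2 + ∑ i, (dx i ψ p) ^ 2)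
      + (((n : ℝ) - 1) / 4) * ψ p * dx j ψ p) q = dx j (Jxfun n ψ j) q := by
    intro j
    rw [dx, dx, (evj j).fderiv_eq]
  rw [e0, Finset.sum_congr rfl (fun j _ => ej j)]
  -- differentiability at q
  have hψd : DifferentiableAt ℝ ψ q := (hC2 q hq).differentiableAt two_ne_zero
  have hud : DifferentiableAt ℝ (dt ψ) q := diff_fderiv_apply (hC2 q hq) _
  have hwd : ∀ i, DifferentiableAt ℝ (dx i ψ) q := fun i => diff_fderiv_apply (hC2 q hq) _
  have hJ0 := ((((((hasD_fst.mul (hud.hasD ((1:ℝ), (0 : EuclideanSpace ℝ (Fin n))))).add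
      (HasD.sum (fun i _ => (hasD_coord i).mul ((hwd i).hasD _)))).const_mul (1/2)).mul
      (hud.hasD _)).sub
      ((((hasD_fst.div_const 2).neg.const_mul (1/2))).mul
        ((((hud.hasD _).sq).neg).add (HasD.sum fun i _ => ((hwd i).hasD _).sq)))).add
      (((hψd.hasD _).const_mul (((n:ℝ)-1)/4)).mul (hud.hasD _))).congr_fun
      (b := J0fun n ψ) (fun _ => rfl)
  have hJx := fun j : Fin n =>
    ((((((hasD_fst.mul (hud.hasD ((0:ℝ), EuclideanSpace.single j (1:ℝ)))).add
      (HasD.sum (fun i _ => (hasD_coord i).mul ((hwd i).hasD _)))).const_mul (1/2)).mul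
      ((hwd j).hasD _)).sub
      (((((hasD_coord j).div_const 2).const_mul (1/2))).mul
        ((((hud.hasD _).sq).neg).add (HasD.sum fun i _ => ((hwd i).hasD _).sq)))).add
      (((hψd.hasD _).const_mul (((n:ℝ)-1)/4)).mul ((hwd j).hasD _))).congr_fun
      (b := Jxfun n ψ j) (fun _ => rfl)
  simp only [dt, dx]
  rw [hJ0.fd, Finset.sum_congr rfl (fun j _ => (hJx j).fd)]
  -- symmetry of second derivatives
  have hswapT : ∀ j : Fin n, (fderiv ℝ (dt ψ) q) ((0:ℝ), EuclideanSpace.single j (1:ℝ))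
      = (fderiv ℝ (dx j ψ) q) ((1:ℝ), (0 : EuclideanSpace ℝ (Fin n))) :=
    fun j => swap_second (hC2 q hq) _ _
  have hsymM : ∀ i j : Fin n, (fderiv ℝ (dx i ψ) q) ((0:ℝ), EuclideanSpace.single j (1:ℝ))
      = (fderiv ℝ (dx j ψ) q) ((0:ℝ), EuclideanSpace.single i (1:ℝ)) :=
    fun i j => swap_second (hC2 q hq) _ _
  have hU0 : (fderiv ℝ ψ q) ((1:ℝ), (0 : EuclideanSpace ℝ (Fin n))) = dt ψ q := rfl
  have hWj : ∀ j : Fin n, (fderiv ℝ ψ q) ((0:ℝ), EuclideanSpace.single j (1:ℝ)) = dx j ψ q :=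
    fun _ => rfl
  simp only [hswapT, hU0, hWj, Prod.fst, Prod.snd, EuclideanSpace.single_apply,
    PiLp.zero_apply, zero_mul, mul_zero, zero_add, add_zero, one_mul, mul_one,
    ite_mul, Finset.sum_add_distrib, Finset.sum_ite_eq', Finset.mem_univ, if_true]
  have step1 : ∀ x ∈ (Finset.univ : Finset (Fin n)),
      (1/2 * (q.1 * (fderiv ℝ (dx x ψ) q) (1, 0)
          + (dx x ψ q + ∑ i, q.2 i * (fderiv ℝ (dx i ψ) q) (0, EuclideanSpace.single x 1)))
          * dx x ψ q
        + 1/2 * (q.1 * dt ψ q + ∑ i, q.2 i * dx i ψ q)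
          * (fderiv ℝ (dx x ψ) q) (0, EuclideanSpace.single x 1)
        - (1/2 * (1/2) * (-dt ψ q ^ 2 + ∑ i, dx i ψ q ^ 2)
          + 1/2 * (q.2 x / 2) * (-(2 * dt ψ q * (fderiv ℝ (dx x ψ) q) (1, 0))
            + ∑ i, 2 * dx i ψ q * (fderiv ℝ (dx i ψ) q) (0, EuclideanSpace.single x 1))))
      = 1/2 * (q.1 * dt ψ q + ∑ i, q.2 i * dx i ψ q)
          * (fderiv ℝ (dx x ψ) q) (0, EuclideanSpace.single x 1)
        + q.1/2 * (dx x ψ q * (fderiv ℝ (dx x ψ) q) (1, 0))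
        + 1/2 * dx x ψ q ^ 2
        + 1/2 * ((∑ i, q.2 i * (fderiv ℝ (dx i ψ) q) (0, EuclideanSpace.single x 1)) * dx x ψ q)
        - 1/4 * (-dt ψ q ^ 2 + ∑ i, dx i ψ q ^ 2)
        + dt ψ q / 2 * (q.2 x * (fderiv ℝ (dx x ψ) q) (1, 0))
        - 1/2 * (q.2 x * ∑ i, dx i ψ q * (fderiv ℝ (dx i ψ) q) (0, EuclideanSpace.single x 1)) := by
    intro x _
    simp only [sum_two]
    ring
  have step2 : ∀ x ∈ (Finset.univ : Finset (Fin n)),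
      ((n:ℝ) - 1) / 4 * dx x ψ q * dx x ψ q = ((n:ℝ) - 1) / 4 * dx x ψ q ^ 2 :=
    fun x _ => by ring
  rw [Finset.sum_congr rfl step1, Finset.sum_congr rfl step2]
  have keylem : ∑ x : Fin n,
        (∑ i, q.2 i * (fderiv ℝ (dx i ψ) q) (0, EuclideanSpace.single x 1)) * dx x ψ q
      = ∑ x : Fin n,
        q.2 x * ∑ i, dx i ψ q * (fderiv ℝ (dx i ψ) q) (0, EuclideanSpace.single x 1) := by
    calc ∑ x : Fin n, (∑ i, q.2 i * (fderiv ℝ (dx i ψ) q) (0, EuclideanSpace.single x 1)) * dx x ψ q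
        = ∑ x : Fin n, ∑ i, q.2 i * (fderiv ℝ (dx i ψ) q) (0, EuclideanSpace.single x 1) * dx x ψ q := by
          exact Finset.sum_congr rfl fun x _ => Finset.sum_mul _ _ _
      _ = ∑ i : Fin n, ∑ x, q.2 i * (fderiv ℝ (dx i ψ) q) (0, EuclideanSpace.single x 1) * dx x ψ q :=
          Finset.sum_comm
      _ = ∑ i : Fin n, q.2 i * ∑ x, dx x ψ q * (fderiv ℝ (dx x ψ) q) (0, EuclideanSpace.single i 1) := by
          refine Finset.sum_congr rfl fun i _ => ?_
          rw [Finset.mul_sum]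
          refine Finset.sum_congr rfl fun x _ => ?_
          rw [hsymM i x]; ring
  simp only [box, Sstar]
  rw [hSop q hq]
  simp only [Afun, dt, dx]
  simp only [Finset.sum_add_distrib, Finset.sum_sub_distrib, ← Finset.mul_sum, sum_two,
    Finset.sum_const, Finset.card_univ, Fintype.card_fin, nsmul_eq_mul]
  simp only [dx] at keylem
  rw [keylem]
  ring
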